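/- The class 𝒪^{ℏ}(ρ) is a local ring: it is closed under the Cauchy product (A·B)(m,n) = Σ_{m₁+m₂=m} Σ_{n₁+n₂=n} A(m₁,n₁)B(m₂,n₂), and every A ∈ 𝒪^{ℏ}(ρ) with A(0,0) ≠ 0 is invertible within 𝒪^{ℏ}(ρ); that is, the unique family A⁻¹ with A·A⁻¹ equal to the identity family (value 1 at (m,n)=(0,0) and 0 elsewhere) again satisfies A⁻¹(m,n) = 0 whenever n > ⟨ρ,m⟩ together with a bound |A⁻¹(m,n)| ≤ B'·C'^{|m|+n}·n! for some constants B', C' > 0. -/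

import Mathlib

open scoped BigOperators Classical

/-- The pairing `⟨ρ, m⟩ = ∑_{a=1}^r ξ_a m_a` of the nef class `ρ` with a multi-index
`m ∈ ℕ^s` (only the first `r` components of `m` enter). -/
def nefPairing (s r : ℕ) (hrs : r ≤ s) (ξ : Fin r → ℝ) (m : Fin s → ℕ) : ℝ :=
  ∑ a : Fin r, ξ a * (m (Fin.castLE hrs a) : ℝ)

/-- Membership in the class `𝒪^{ℏ}(ρ)` of coefficient families `A : ℕ^s × ℕ → ℂ`:
(i) `A(m,n) = 0` whenever `n > ⟨ρ,m⟩`;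
(ii) there are `B, C > 0` with `|A(m,n)| ≤ B C^{|m|+n} n!` for all `m, n`. -/
def MemOh (s r : ℕ) (hrs : r ≤ s) (ξ : Fin r → ℝ) (A : (Fin s → ℕ) → ℕ → ℂ) : Prop :=
  (∀ (m : Fin s → ℕ) (n : ℕ), nefPairing s r hrs ξ m < (n : ℝ) → A m n = 0) ∧
  (∃ B C : ℝ, 0 < B ∧ 0 < C ∧ ∀ (m : Fin s → ℕ) (n : ℕ),
    ‖A m n‖ ≤ B * C ^ ((∑ j, m j) + n) * (Nat.factorial n : ℝ))

/-- The Cauchy product `(A·B)(m,n) = ∑_{m₁+m₂=m} ∑_{n₁+n₂=n} A(m₁,n₁) B(m₂,n₂)` of two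
coefficient families indexed by `ℕ^s × ℕ` (a finite sum, written as a `tsum`). -/
noncomputable def cauchyProdN (s : ℕ) (A B : (Fin s → ℕ) → ℕ → ℂ) :
    (Fin s → ℕ) → ℕ → ℂ :=
  fun m n => ∑' p : (Fin s → ℕ) × ℕ,
    if p.1 ≤ m ∧ p.2 ≤ n then A p.1 p.2 * B (fun j => m j - p.1 j) (n - p.2) else 0

/-- The identity coefficient family: value `1` at `(m,n) = (0,0)` and `0` elsewhere. -/
def deltaFam (s : ℕ) : (Fin s → ℕ) → ℕ → ℂ :=
  fun m n => if m = 0 ∧ n = 0 then 1 else 0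

section Aux
variable {s r : ℕ}

lemma cauchy_eq (A B : (Fin s → ℕ) → ℕ → ℂ) (m : Fin s → ℕ) (n : ℕ) :
    cauchyProdN s A B m n =
      ∑ p ∈ Finset.Iic m ×ˢ Finset.Iic n,
        A p.1 p.2 * B (fun j => m j - p.1 j) (n - p.2) := by
  unfold cauchyProdN
  rw [tsum_eq_sum (s := Finset.Iic m ×ˢ Finset.Iic n)]
  · exact Finset.sum_congr rfl fun p hp => by
      rw [Finset.mem_product, Finset.mem_Iic, Finset.mem_Iic] at hp
      rw [if_pos hp]
  · intro p hp
    rw [Finset.mem_product, Finset.mem_Iic, Finset.mem_Iic] at hp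
    rw [if_neg hp]

lemma fact_mul_fact_le {n₁ n : ℕ} (h : n₁ ≤ n) :
    (Nat.factorial n₁ : ℝ) * (Nat.factorial (n - n₁) : ℝ) ≤ (Nat.factorial n : ℝ) := by
  have hc : 1 ≤ Nat.choose n n₁ := Nat.succ_le_of_lt (Nat.choose_pos h)
  have : Nat.factorial n₁ * Nat.factorial (n - n₁) ≤ Nat.factorial n := by
    calc Nat.factorial n₁ * Nat.factorial (n - n₁)
        ≤ Nat.choose n n₁ * Nat.factorial n₁ * Nat.factorial (n - n₁) :=
          Nat.mul_le_mul (Nat.le_mul_of_pos_left _ (Nat.choose_pos h)) le_rfl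
      _ = Nat.factorial n := Nat.choose_mul_factorial_mul_factorial h
  exact_mod_cast this

lemma nefPairing_split (hrs : r ≤ s) (ξ : Fin r → ℝ) {m₁ m : Fin s → ℕ} (h : m₁ ≤ m) :
    nefPairing s r hrs ξ (fun j => m j - m₁ j) =
      nefPairing s r hrs ξ m - nefPairing s r hrs ξ m₁ := by
  unfold nefPairing
  rw [← Finset.sum_sub_distrib]
  refine Finset.sum_congr rfl fun a _ => ?_
  have hle : m₁ (Fin.castLE hrs a) ≤ m (Fin.castLE hrs a) := h _
  rw [Nat.cast_sub hle]; ring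

lemma sum_sub_eq {m m₁ : Fin s → ℕ} (h : m₁ ≤ m) :
    (∑ j, (m j - m₁ j)) + (∑ j, m₁ j) = ∑ j, m j := by
  rw [← Finset.sum_add_distrib]
  exact Finset.sum_congr rfl fun j _ => Nat.sub_add_cancel (h j)

lemma card_prod_le (m : Fin s → ℕ) (n : ℕ) :
    (Finset.Iic m ×ˢ Finset.Iic n).card ≤ 2 ^ ((∑ j, m j) + n) := by
  rw [Finset.card_product, Pi.card_Iic, Nat.card_Iic]
  simp_rw [Nat.card_Iic]
  have h1 : ∏ j, (m j + 1) ≤ ∏ j, 2 ^ (m j) :=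
    Finset.prod_le_prod' fun j _ => Nat.lt_two_pow_self (n := m j)
  calc (∏ j, (m j + 1)) * (n + 1) ≤ (∏ j, 2 ^ (m j)) * 2 ^ n :=
        Nat.mul_le_mul h1 (Nat.lt_two_pow_self (n := n))
    _ = 2 ^ ((∑ j, m j) + n) := by rw [Finset.prod_pow_eq_pow_sum, ← pow_add]

lemma prod_closed (hrs : r ≤ s) (ξ : Fin r → ℝ) (hξ : ∀ a, 0 ≤ ξ a)
    (A B : (Fin s → ℕ) → ℕ → ℂ) (hA : MemOh s r hrs ξ A) (hB : MemOh s r hrs ξ B) :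
    MemOh s r hrs ξ (cauchyProdN s A B) := by
  obtain ⟨hA1, B₁, C₁, hB₁, hC₁, hA2⟩ := hA
  obtain ⟨hB1, B₂, C₂, hB₂, hC₂, hB2⟩ := hB
  constructor
  · intro m n hmn
    rw [cauchy_eq]
    refine Finset.sum_eq_zero fun p hp => ?_
    rw [Finset.mem_product, Finset.mem_Iic, Finset.mem_Iic] at hp
    obtain ⟨h1, h2⟩ := hp
    by_cases hc : nefPairing s r hrs ξ p.1 < (p.2 : ℝ)
    · rw [hA1 _ _ hc, zero_mul]
    · push_neg at hc
      rw [hB1, mul_zero]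
      rw [nefPairing_split hrs ξ h1]
      have : ((n - p.2 : ℕ) : ℝ) = (n : ℝ) - (p.2 : ℝ) := by
        rw [Nat.cast_sub h2]
      rw [this]
      linarith
  · refine ⟨B₁ * B₂, 2 * max C₁ C₂, by positivity, by positivity, fun m n => ?_⟩
    set C₀ := max C₁ C₂ with hC₀
    have hC₀pos : 0 < C₀ := lt_max_of_lt_left hC₁
    set k := (∑ j, m j) + n with hk
    rw [cauchy_eq]
    have hterm : ∀ p ∈ Finset.Iic m ×ˢ Finset.Iic n,
        ‖A p.1 p.2 * B (fun j => m j - p.1 j) (n - p.2)‖ ≤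
          B₁ * B₂ * C₀ ^ k * (Nat.factorial n : ℝ) := by
      intro p hp
      rw [Finset.mem_product, Finset.mem_Iic, Finset.mem_Iic] at hp
      obtain ⟨h1, h2⟩ := hp
      rw [norm_mul]
      set k₁ := (∑ j, p.1 j) + p.2 with hk₁
      set k₂ := (∑ j, (m j - p.1 j)) + (n - p.2) with hk₂
      have hkk : k₁ + k₂ = k := by
        have := sum_sub_eq h1
        have h2' := h2
        simp only [hk₁, hk₂, hk]; omega
      calc ‖A p.1 p.2‖ * ‖B (fun j => m j - p.1 j) (n - p.2)‖
          ≤ (B₁ * C₁ ^ k₁ * (Nat.factorial p.2 : ℝ)) *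
            (B₂ * C₂ ^ k₂ * (Nat.factorial (n - p.2) : ℝ)) := by
            refine mul_le_mul (hA2 p.1 p.2) (hB2 _ _) (norm_nonneg _) (by positivity)
        _ ≤ (B₁ * C₀ ^ k₁ * (Nat.factorial p.2 : ℝ)) *
            (B₂ * C₀ ^ k₂ * (Nat.factorial (n - p.2) : ℝ)) := by
            gcongr
            · exact le_max_left _ _
            · exact le_max_right _ _
        _ = B₁ * B₂ * C₀ ^ k * ((Nat.factorial p.2 : ℝ) * (Nat.factorial (n - p.2) : ℝ)) := by
            rw [← hkk, pow_add]; ring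
        _ ≤ B₁ * B₂ * C₀ ^ k * (Nat.factorial n : ℝ) := by
            refine mul_le_mul_of_nonneg_left (fact_mul_fact_le h2) (by positivity)
    calc ‖∑ p ∈ Finset.Iic m ×ˢ Finset.Iic n,
            A p.1 p.2 * B (fun j => m j - p.1 j) (n - p.2)‖
        ≤ ∑ p ∈ Finset.Iic m ×ˢ Finset.Iic n,
            ‖A p.1 p.2 * B (fun j => m j - p.1 j) (n - p.2)‖ :=
          norm_sum_le _ _
      _ ≤ ∑ _p ∈ Finset.Iic m ×ˢ Finset.Iic n, B₁ * B₂ * C₀ ^ k * (Nat.factorial n : ℝ) :=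
          Finset.sum_le_sum hterm
      _ = ((Finset.Iic m ×ˢ Finset.Iic n).card : ℝ) * (B₁ * B₂ * C₀ ^ k * (Nat.factorial n : ℝ)) := by
          rw [Finset.sum_const, nsmul_eq_mul]
      _ ≤ (2 ^ k : ℝ) * (B₁ * B₂ * C₀ ^ k * (Nat.factorial n : ℝ)) := by
          refine mul_le_mul_of_nonneg_right ?_ (by positivity)
          exact_mod_cast card_prod_le m n
      _ = B₁ * B₂ * (2 * C₀) ^ k * (Nat.factorial n : ℝ) := by
          rw [mul_pow]; ring

end Aux
section Inv
variable {s r : ℕ}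

lemma measure_lt {m : Fin s → ℕ} {n : ℕ} {p : (Fin s → ℕ) × ℕ}
    (hp : p ∈ (Finset.Iic m ×ˢ Finset.Iic n).erase (0, 0)) :
    (∑ j, (m j - p.1 j)) + (n - p.2) < (∑ j, m j) + n := by
  rw [Finset.mem_erase, Finset.mem_product, Finset.mem_Iic, Finset.mem_Iic] at hp
  obtain ⟨hne, h1, h2⟩ := hp
  have hs := sum_sub_eq h1
  have hpos : 0 < (∑ j, p.1 j) + p.2 := by
    rcases Nat.eq_zero_or_pos ((∑ j, p.1 j) + p.2) with h | h
    · exfalso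
      have h3 : ∑ j, p.1 j = 0 := by omega
      have h4 : p.2 = 0 := by omega
      rw [Finset.sum_eq_zero_iff] at h3
      exact hne (Prod.ext (funext fun j => h3 j (Finset.mem_univ j)) h4)
    · exact h
  omega

noncomputable def invFam (s : ℕ) (A : (Fin s → ℕ) → ℕ → ℂ) (m : Fin s → ℕ) (n : ℕ) : ℂ :=
  if m = 0 ∧ n = 0 then (A 0 0)⁻¹
  else -(A 0 0)⁻¹ * ∑ p ∈ ((Finset.Iic m ×ˢ Finset.Iic n).erase (0, 0)).attach,
      A p.1.1 p.1.2 * invFam s A (fun j => m j - p.1.1 j) (n - p.1.2)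
termination_by (∑ j, m j) + n
decreasing_by exact measure_lt p.2

lemma invFam_spec (A : (Fin s → ℕ) → ℕ → ℂ) (m : Fin s → ℕ) (n : ℕ) :
    invFam s A m n = if m = 0 ∧ n = 0 then (A 0 0)⁻¹
      else -(A 0 0)⁻¹ * ∑ p ∈ (Finset.Iic m ×ˢ Finset.Iic n).erase (0, 0),
        A p.1 p.2 * invFam s A (fun j => m j - p.1 j) (n - p.2) := by
  rw [invFam]
  congr 1
  rw [← Finset.sum_attach ((Finset.Iic m ×ˢ Finset.Iic n).erase (0, 0))
    (fun p => A p.1 p.2 * invFam s A (fun j => m j - p.1 j) (n - p.2))]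

lemma zero_mem_prod (m : Fin s → ℕ) (n : ℕ) :
    ((0, 0) : (Fin s → ℕ) × ℕ) ∈ Finset.Iic m ×ˢ Finset.Iic n := by
  rw [Finset.mem_product, Finset.mem_Iic, Finset.mem_Iic]
  exact ⟨fun j => Nat.zero_le _, Nat.zero_le _⟩

lemma cauchy_split (A A' : (Fin s → ℕ) → ℕ → ℂ) (m : Fin s → ℕ) (n : ℕ) :
    cauchyProdN s A A' m n = A 0 0 * A' m n +
      ∑ p ∈ (Finset.Iic m ×ˢ Finset.Iic n).erase (0, 0),
        A p.1 p.2 * A' (fun j => m j - p.1 j) (n - p.2) := by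
  rw [cauchy_eq]
  rw [← Finset.add_sum_erase _ _ (zero_mem_prod m n)]
  norm_num

lemma cauchy_invFam (A : (Fin s → ℕ) → ℕ → ℂ) (ha : A 0 0 ≠ 0) :
    cauchyProdN s A (invFam s A) = deltaFam s := by
  funext m n
  rw [cauchy_split]
  by_cases h : m = 0 ∧ n = 0
  · obtain ⟨hm, hn⟩ := h
    subst hm; subst hn
    have he : ((Finset.Iic (0 : Fin s → ℕ) ×ˢ Finset.Iic (0 : ℕ)).erase (0, 0)) = ∅ := by
      ext p
      simp only [Finset.mem_erase, Finset.mem_product, Finset.mem_Iic, Finset.notMem_empty,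
        iff_false]
      rintro ⟨hne, h1, h2⟩
      exact hne (Prod.ext (le_antisymm h1 (fun j => Nat.zero_le _)) (Nat.le_zero.mp h2))
    rw [he, Finset.sum_empty, add_zero, invFam_spec, if_pos ⟨rfl, rfl⟩,
      mul_inv_cancel₀ ha]
    simp [deltaFam]
  · rw [invFam_spec A m n, if_neg h, deltaFam, if_neg h]
    field_simp
    ring
  
lemma invFam_unique (A : (Fin s → ℕ) → ℕ → ℂ) (ha : A 0 0 ≠ 0)
    (A'' : (Fin s → ℕ) → ℕ → ℂ) (h : cauchyProdN s A A'' = deltaFam s) :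
    A'' = invFam s A := by
  have key : ∀ k (m : Fin s → ℕ) (n : ℕ), (∑ j, m j) + n = k → A'' m n = invFam s A m n := by
    intro k
    induction k using Nat.strong_induction_on with
    | _ k ih =>
      intro m n hk
      have h1 : cauchyProdN s A A'' m n = deltaFam s m n := by rw [h]
      have h2 : cauchyProdN s A (invFam s A) m n = deltaFam s m n := by
        rw [cauchy_invFam A ha]
      rw [cauchy_split] at h1 h2
      have hsum : ∑ p ∈ (Finset.Iic m ×ˢ Finset.Iic n).erase (0, 0),
            A p.1 p.2 * A'' (fun j => m j - p.1 j) (n - p.2)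
          = ∑ p ∈ (Finset.Iic m ×ˢ Finset.Iic n).erase (0, 0),
            A p.1 p.2 * invFam s A (fun j => m j - p.1 j) (n - p.2) := by
        refine Finset.sum_congr rfl fun p hp => ?_
        have := measure_lt hp
        rw [ih ((∑ j, (m j - p.1 j)) + (n - p.2)) (by omega) _ _ rfl]
      rw [hsum] at h1
      have := h1.trans h2.symm
      have h3 : A 0 0 * A'' m n = A 0 0 * invFam s A m n := by
        exact add_right_cancel this
      exact mul_left_cancel₀ ha h3
  funext m n
  exact key _ m n rfl

end Inv

section InvMem
variable {s r : ℕ}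

lemma geo_le {t : ℝ} (h0 : 0 ≤ t) (h1 : t < 1) (N : ℕ) :
    ∑ i ∈ Finset.Iic N, t ^ i ≤ (1 - t)⁻¹ := by
  have hIic : Finset.Iic N = Finset.range (N + 1) := by
    ext x; simp [Nat.lt_succ_iff]
  rw [hIic]
  refine le_trans (Summable.sum_le_tsum _ (fun i _ => pow_nonneg h0 i)
    (summable_geometric_of_lt_one h0 h1)) ?_
  rw [tsum_geometric_of_lt_one h0 h1]

lemma Iic_pi_eq (m : Fin s → ℕ) :
    Finset.Iic m = Fintype.piFinset fun j => Finset.Iic (m j) := by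
  ext p; simp [Fintype.mem_piFinset, Pi.le_def]

lemma sum_pow_pi_le {t : ℝ} (h0 : 0 ≤ t) (h1 : t < 1) (m : Fin s → ℕ) :
    ∑ q ∈ Finset.Iic m, t ^ (∑ j, q j) ≤ ((1 - t)⁻¹) ^ s := by
  rw [Iic_pi_eq]
  have he : ∀ q : Fin s → ℕ, t ^ (∑ j, q j) = ∏ j, t ^ (q j) := by
    intro q; rw [Finset.prod_pow_eq_pow_sum]
  simp_rw [he]
  rw [← Finset.prod_univ_sum]
  calc ∏ j : Fin s, ∑ i ∈ Finset.Iic (m j), t ^ i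
      ≤ ∏ _j : Fin s, (1 - t)⁻¹ :=
        Finset.prod_le_prod (fun j _ => Finset.sum_nonneg fun i _ => pow_nonneg h0 i)
          (fun j _ => geo_le h0 h1 (m j))
    _ = ((1 - t)⁻¹) ^ s := by simp

lemma sum_pow_prod_le {t : ℝ} (h0 : 0 ≤ t) (h1 : t < 1) (m : Fin s → ℕ) (n : ℕ) :
    ∑ p ∈ Finset.Iic m ×ˢ Finset.Iic n, t ^ ((∑ j, p.1 j) + p.2) ≤ ((1 - t)⁻¹) ^ (s + 1) := by
  have h2 : (0:ℝ) < 1 - t := by linarith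
  have hsplit : ∑ p ∈ Finset.Iic m ×ˢ Finset.Iic n, t ^ ((∑ j, p.1 j) + p.2)
      = (∑ q ∈ Finset.Iic m, t ^ (∑ j, q j)) * ∑ i ∈ Finset.Iic n, t ^ i := by
    rw [Finset.sum_mul_sum, Finset.sum_product]
    exact Finset.sum_congr rfl fun q _ => Finset.sum_congr rfl fun i _ => pow_add t _ _
  rw [hsplit]
  calc (∑ q ∈ Finset.Iic m, t ^ (∑ j, q j)) * ∑ i ∈ Finset.Iic n, t ^ i
      ≤ ((1 - t)⁻¹) ^ s * (1 - t)⁻¹ :=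
        mul_le_mul (sum_pow_pi_le h0 h1 m) (geo_le h0 h1 n)
          (Finset.sum_nonneg fun i _ => pow_nonneg h0 i)
          (pow_nonneg (by positivity) s)
    _ = ((1 - t)⁻¹) ^ (s + 1) := (pow_succ _ _).symm

lemma inv_pow_le {t : ℝ} (h0 : 0 ≤ t) (h : ((s : ℝ) + 1) * t ≤ 1 / 2) :
    ((1 - t)⁻¹) ^ (s + 1) ≤ 1 + 2 * ((s : ℝ) + 1) * t := by
  set u : ℝ := (s : ℝ) + 1 with hu
  have hu1 : 1 ≤ u := by have : (0:ℝ) ≤ (s:ℝ) := Nat.cast_nonneg s; linarith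
  have ht : t ≤ 1 / 2 := by nlinarith
  have h2 : (0:ℝ) < 1 - t := by linarith
  have hb : 1 - u * t ≤ (1 - t) ^ (s + 1) := by
    have hp := one_add_mul_le_pow (a := -t) (by linarith) (s + 1)
    have hc : ((s:ℝ) + 1) = ((s + 1 : ℕ) : ℝ) := by push_cast; ring
    calc 1 - u * t = 1 + ((s + 1 : ℕ) : ℝ) * (-t) := by rw [← hc]; ring
      _ ≤ (1 + -t) ^ (s + 1) := hp
      _ = (1 - t) ^ (s + 1) := by ring_nf
  have hut : 0 < 1 - u * t := by nlinarith
  rw [show ((1 - t)⁻¹) ^ (s + 1) = ((1 - t) ^ (s + 1))⁻¹ from inv_pow _ _]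
  refine (inv_anti₀ hut hb).trans ?_
  rw [inv_le_iff_one_le_mul₀ hut]
  nlinarith [mul_nonneg (mul_nonneg (zero_le_one.trans hu1) h0)
    (by nlinarith : (0:ℝ) ≤ 1 - 2*(u*t))]

lemma invFam_support (hrs : r ≤ s) (ξ : Fin r → ℝ)
    (A : (Fin s → ℕ) → ℕ → ℂ)
    (hA1 : ∀ (m : Fin s → ℕ) (n : ℕ), nefPairing s r hrs ξ m < (n : ℝ) → A m n = 0) :
    ∀ (m : Fin s → ℕ) (n : ℕ), nefPairing s r hrs ξ m < (n : ℝ) → invFam s A m n = 0 := by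
  have key : ∀ k (m : Fin s → ℕ) (n : ℕ), (∑ j, m j) + n = k →
      nefPairing s r hrs ξ m < (n : ℝ) → invFam s A m n = 0 := by
    intro k
    induction k using Nat.strong_induction_on with
    | _ k ih =>
      intro m n hk hlt
      have hne : ¬(m = 0 ∧ n = 0) := by
        rintro ⟨hm, hn⟩; subst hm; subst hn
        simp [nefPairing] at hlt
      rw [invFam_spec, if_neg hne]
      rw [Finset.sum_eq_zero, mul_zero]
      intro p hp
      have hp' := hp
      rw [Finset.mem_erase, Finset.mem_product, Finset.mem_Iic, Finset.mem_Iic] at hp'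
      obtain ⟨hne', h1, h2⟩ := hp'
      by_cases hc : nefPairing s r hrs ξ p.1 < (p.2 : ℝ)
      · rw [hA1 _ _ hc, zero_mul]
      · push_neg at hc
        rw [ih ((∑ j, (m j - p.1 j)) + (n - p.2)) (by have := measure_lt hp; omega) _ _ rfl,
          mul_zero]
        rw [nefPairing_split hrs ξ h1, Nat.cast_sub h2]
        linarith
  intro m n
  exact key _ m n rfl

lemma invFam_bound (A : (Fin s → ℕ) → ℕ → ℂ) (ha : A 0 0 ≠ 0)
    {B C : ℝ} (hB : 0 < B) (hC : 0 < C)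
    (hA2 : ∀ (m : Fin s → ℕ) (n : ℕ),
      ‖A m n‖ ≤ B * C ^ ((∑ j, m j) + n) * (Nat.factorial n : ℝ)) :
    ∃ B' C' : ℝ, 0 < B' ∧ 0 < C' ∧ ∀ (m : Fin s → ℕ) (n : ℕ),
      ‖invFam s A m n‖ ≤ B' * C' ^ ((∑ j, m j) + n) * (Nat.factorial n : ℝ) := by
  set a := ‖A 0 0‖ with hadef
  have ha0 : 0 < a := norm_pos_iff.mpr ha
  set u : ℝ := (s : ℝ) + 1 with hudef
  have hu1 : 1 ≤ u := by rw [hudef]; have : (0:ℝ) ≤ (s:ℝ) := Nat.cast_nonneg s; linarith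
  have hu0 : 0 < u := lt_of_lt_of_le one_pos hu1
  set t : ℝ := min (1 / (2 * u)) (a / (4 * B * u)) with htdef
  have ht0 : 0 < t := lt_min (by positivity) (by positivity)
  have hut : u * t ≤ 1 / 2 := by
    have h1 : t ≤ 1 / (2 * u) := min_le_left _ _
    calc u * t ≤ u * (1 / (2 * u)) := by
          exact mul_le_mul_of_nonneg_left h1 hu0.le
      _ = 1 / 2 := by field_simp
  have ht1 : t < 1 := by nlinarith
  set C' : ℝ := C / t with hC'def
  have hC' : 0 < C' := by positivity
  have htC : C = t * C' := by rw [hC'def]; field_simp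
  set B' : ℝ := a⁻¹ with hB'def
  have hB'0 : 0 < B' := by positivity
  refine ⟨B', C', hB'0, hC', ?_⟩
  have hS : ∀ (m : Fin s → ℕ) (n : ℕ),
      ∑ p ∈ (Finset.Iic m ×ˢ Finset.Iic n).erase ((0, 0) : (Fin s → ℕ) × ℕ),
        t ^ ((∑ j, p.1 j) + p.2) ≤ a / (2 * B) := by
    intro m n
    have h1 := Finset.add_sum_erase _
      (fun p : (Fin s → ℕ) × ℕ => t ^ ((∑ j, p.1 j) + p.2)) (zero_mem_prod m n)
    have h1' : 1 + ∑ p ∈ (Finset.Iic m ×ˢ Finset.Iic n).erase (0, 0),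
        t ^ ((∑ j, p.1 j) + p.2)
        = ∑ p ∈ Finset.Iic m ×ˢ Finset.Iic n, t ^ ((∑ j, p.1 j) + p.2) := by
      simpa using h1
    have h2 := sum_pow_prod_le ht0.le ht1 m n
    have h3 := inv_pow_le (s := s) ht0.le hut
    have h4 : 2 * u * t ≤ a / (2 * B) := by
      have h5 : t ≤ a / (4 * B * u) := min_le_right _ _
      calc 2 * u * t ≤ 2 * u * (a / (4 * B * u)) := by
            exact mul_le_mul_of_nonneg_left h5 (by positivity)
        _ = a / (2 * B) := by field_simp; ring
    have h3' : ∑ p ∈ Finset.Iic m ×ˢ Finset.Iic n, t ^ ((∑ j, p.1 j) + p.2)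
        ≤ 1 + 2 * u * t := by
      rw [hudef]; exact h2.trans h3
    linarith
  have key : ∀ k (m : Fin s → ℕ) (n : ℕ), (∑ j, m j) + n = k →
      ‖invFam s A m n‖ ≤ B' * C' ^ k * (Nat.factorial n : ℝ) := by
    intro k
    induction k using Nat.strong_induction_on with
    | _ k ih =>
      intro m n hk
      by_cases h : m = 0 ∧ n = 0
      · obtain ⟨hm, hn⟩ := h
        subst hm; subst hn
        have hk0 : k = 0 := by simpa using hk.symm
        subst hk0
        rw [invFam_spec, if_pos ⟨rfl, rfl⟩, norm_inv]
        simp [hB'def, hadef]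
      · rw [invFam_spec, if_neg h, norm_mul]
        have habs : ‖-(A 0 0)⁻¹‖ = a⁻¹ := by
          rw [norm_neg, norm_inv]
        rw [habs]
        have hterm : ∀ p ∈ (Finset.Iic m ×ˢ Finset.Iic n).erase ((0,0) : (Fin s → ℕ) × ℕ),
            ‖A p.1 p.2 * invFam s A (fun j => m j - p.1 j) (n - p.2)‖ ≤
              B * B' * C' ^ k * (Nat.factorial n : ℝ) * t ^ ((∑ j, p.1 j) + p.2) := by
          intro p hp
          have hp' := hp
          rw [Finset.mem_erase, Finset.mem_product, Finset.mem_Iic, Finset.mem_Iic] at hp'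
          obtain ⟨hne', h1, h2⟩ := hp'
          set k₁ := (∑ j, p.1 j) + p.2 with hk₁
          set k₂ := (∑ j, (m j - p.1 j)) + (n - p.2) with hk₂
          have hkk : k₁ + k₂ = k := by
            have := sum_sub_eq h1
            simp only [hk₁, hk₂, ← hk]; omega
          have hihp : ‖invFam s A (fun j => m j - p.1 j) (n - p.2)‖ ≤
              B' * C' ^ k₂ * (Nat.factorial (n - p.2) : ℝ) := by
            refine ih k₂ ?_ _ _ rfl
            have := measure_lt hp; omega
          rw [norm_mul]
          calc ‖A p.1 p.2‖ * ‖invFam s A (fun j => m j - p.1 j) (n - p.2)‖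
              ≤ (B * C ^ k₁ * (Nat.factorial p.2 : ℝ)) * (B' * C' ^ k₂ * (Nat.factorial (n - p.2) : ℝ)) :=
                mul_le_mul (hA2 p.1 p.2) hihp (norm_nonneg _) (by positivity)
            _ = B * B' * (C ^ k₁ * C' ^ k₂) * ((Nat.factorial p.2 : ℝ) * (Nat.factorial (n - p.2) : ℝ)) := by
                ring
            _ ≤ B * B' * (C ^ k₁ * C' ^ k₂) * (Nat.factorial n : ℝ) := by
                refine mul_le_mul_of_nonneg_left (fact_mul_fact_le h2) (by positivity)
            _ = B * B' * C' ^ k * (Nat.factorial n : ℝ) * t ^ k₁ := by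
                rw [htC, mul_pow, ← hkk, pow_add]; ring
        calc a⁻¹ * ‖∑ p ∈ (Finset.Iic m ×ˢ Finset.Iic n).erase (0,0),
                A p.1 p.2 * invFam s A (fun j => m j - p.1 j) (n - p.2)‖
            ≤ a⁻¹ * ∑ p ∈ (Finset.Iic m ×ˢ Finset.Iic n).erase (0,0),
                ‖A p.1 p.2 * invFam s A (fun j => m j - p.1 j) (n - p.2)‖ := by
              exact mul_le_mul_of_nonneg_left (norm_sum_le _ _) (by positivity)
          _ ≤ a⁻¹ * ∑ p ∈ (Finset.Iic m ×ˢ Finset.Iic n).erase (0,0),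
                B * B' * C' ^ k * (Nat.factorial n : ℝ) * t ^ ((∑ j, p.1 j) + p.2) := by
              exact mul_le_mul_of_nonneg_left (Finset.sum_le_sum hterm) (by positivity)
          _ = a⁻¹ * (B * B' * C' ^ k * (Nat.factorial n : ℝ) *
                ∑ p ∈ (Finset.Iic m ×ˢ Finset.Iic n).erase (0,0), t ^ ((∑ j, p.1 j) + p.2)) := by
              rw [← Finset.mul_sum]
          _ ≤ a⁻¹ * (B * B' * C' ^ k * (Nat.factorial n : ℝ) * (a / (2 * B))) := by
              refine mul_le_mul_of_nonneg_left (mul_le_mul_of_nonneg_left (hS m n)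
                (by positivity)) (by positivity)
          _ = (B' * C' ^ k * (Nat.factorial n : ℝ)) / 2 := by
              field_simp
          _ ≤ B' * C' ^ k * (Nat.factorial n : ℝ) := by
              have hfact : (0:ℝ) < (Nat.factorial n : ℝ) := by
                exact_mod_cast Nat.factorial_pos n
              have hCk : (0:ℝ) < C' ^ k := pow_pos hC' k
              nlinarith [mul_pos (mul_pos hB'0 hCk) hfact]
  intro m n
  exact key _ m n rfl

end InvMem

/-- The class `𝒪^{ℏ}(ρ)` is a local ring: it is closed under the Cauchy
product, and every `A ∈ 𝒪^{ℏ}(ρ)` with `A(0,0) ≠ 0` is invertible within `𝒪^{ℏ}(ρ)` — the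
unique family `A⁻¹` with `A · A⁻¹` equal to the identity family again satisfies the support
condition (i) and a factorial-type bound (ii). -/
theorem memOh_localRing (s r : ℕ) (hr : 1 ≤ r) (hrs : r ≤ s)
    (ξ : Fin r → ℝ) (hξ : ∀ a, 0 ≤ ξ a) :
    (∀ A B : (Fin s → ℕ) → ℕ → ℂ, MemOh s r hrs ξ A → MemOh s r hrs ξ B →
      MemOh s r hrs ξ (cauchyProdN s A B)) ∧
    (∀ A : (Fin s → ℕ) → ℕ → ℂ, MemOh s r hrs ξ A → A 0 0 ≠ 0 →
      ∃ A' : (Fin s → ℕ) → ℕ → ℂ,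
        cauchyProdN s A A' = deltaFam s ∧ MemOh s r hrs ξ A' ∧
        ∀ A'' : (Fin s → ℕ) → ℕ → ℂ, cauchyProdN s A A'' = deltaFam s → A'' = A') := by
  constructor
  · intro A B hA hB
    exact prod_closed hrs ξ hξ A B hA hB
  · intro A hA ha
    refine ⟨invFam s A, cauchy_invFam A ha,
      ⟨invFam_support hrs ξ A hA.1, ?_⟩,
      fun A'' h => invFam_unique A ha A'' h⟩
    obtain ⟨_, B, C, hB, hC, hA2⟩ := hA
    exact invFam_bound A ha hB hC hA2
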